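/- arXiv:1012.1541 — 3 statements merged into one kernel-verified Lean document; each statement's English description precedes it below -/
import Mathlib

section
/- If f : X → Y is a homotopy equivalence of relative categories (i.e. there exists a relative functor g : Y → X such that gf and fg are connected to the respective identity functors by finite zigzags of natural weak equivalences), and both X and Y satisfy the two-out-of-three property for their weak equivalences, then a morphism x : X₁ → X₂ in X is a weak equivalence if and only if f(x) : f(X₁) → f(X₂) is a weak equivalence in Y. -/
open CategoryTheory

/-- A (small) relative category: a category `C` together with a wide subcategory `W`
of weak equivalences (containing all identities and closed under composition). -/
structure RelativeCat where
  C : Type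
  [cat : SmallCategory C]
  W : MorphismProperty C
  id_mem : ∀ X : C, W (𝟙 X)
  comp_mem : ∀ {X Y Z : C} (f : X ⟶ Y) (g : Y ⟶ Z), W f → W g → W (f ≫ g)

attribute [instance] RelativeCat.cat

/-- A relative functor: a weak-equivalence-preserving functor. -/
structure RelFunctor (X Y : RelativeCat) where
  F : X.C ⥤ Y.C
  mapW : ∀ {A B : X.C} (f : A ⟶ B), X.W f → Y.W (F.map f)

/-- A single natural weak equivalence between two functors `X.C ⥤ Y.C`:
a natural transformation all of whose components are weak equivalences of `Y`. -/
def NatWE (X Y : RelativeCat) (F G : X.C ⥤ Y.C) : Prop :=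
  ∃ η : F ⟶ G, ∀ A : X.C, Y.W (η.app A)

/-- Two functors are naturally weakly equivalent if they are connected by a finite
zigzag of natural weak equivalences. -/
def NatWEquiv (X Y : RelativeCat) (F G : X.C ⥤ Y.C) : Prop :=
  Relation.EqvGen (NatWE X Y) F G

/-- A relative functor is a homotopy equivalence if it admits a homotopy inverse. -/
def IsHomotopyEquiv {X Y : RelativeCat} (f : RelFunctor X Y) : Prop :=
  ∃ g : RelFunctor Y X,
    NatWEquiv X X (f.F ⋙ g.F) (𝟭 X.C) ∧ NatWEquiv Y Y (g.F ⋙ f.F) (𝟭 Y.C)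

/-- The two out of three property for the weak equivalences of a relative category. -/
def TwoOutOfThree (X : RelativeCat) : Prop :=
  ∀ {A B C : X.C} (u : A ⟶ B) (v : B ⟶ C),
    (X.W u → X.W v → X.W (u ≫ v)) ∧
    (X.W u → X.W (u ≫ v) → X.W v) ∧
    (X.W v → X.W (u ≫ v) → X.W u)

/-- A single natural weak equivalence transfers weak-equivalence-ness of images. -/
lemma natWE_iff {X Y : RelativeCat} (tY : TwoOutOfThree Y) {F G : X.C ⥤ Y.C}
    (h : NatWE X Y F G) {A B : X.C} (x : A ⟶ B) :
    Y.W (F.map x) ↔ Y.W (G.map x) := by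
  obtain ⟨η, hη⟩ := h
  have nat := η.naturality x
  constructor
  · intro hx
    have h1 := (tY (F.map x) (η.app B)).1 hx (hη B)
    rw [nat] at h1
    exact (tY (η.app A) (G.map x)).2.1 (hη A) h1
  · intro hx
    have h1 := (tY (η.app A) (G.map x)).1 (hη A) hx
    rw [← nat] at h1
    exact (tY (F.map x) (η.app B)).2.2 (hη B) h1

/-- A zigzag of natural weak equivalences transfers weak-equivalence-ness of images. -/
lemma natWEquiv_iff {X Y : RelativeCat} (tY : TwoOutOfThree Y) {F G : X.C ⥤ Y.C}
    (h : NatWEquiv X Y F G) {A B : X.C} (x : A ⟶ B) :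
    Y.W (F.map x) ↔ Y.W (G.map x) := by
  induction h with
  | rel _ _ h => exact natWE_iff tY h x
  | refl => rfl
  | symm _ _ _ ih => exact ih.symm
  | trans _ _ _ _ _ ih1 ih2 => exact ih1.trans ih2

/-- If `f : X → Y` is a homotopy equivalence of relative categories (with homotopy
inverse `g`), and both `X` and `Y` satisfy the two-out-of-three property, then a map
`x` in `X` is a weak equivalence iff `f x` is a weak equivalence in `Y`. -/
theorem weakEquivalence_iff_of_homotopyEquivalence
    (X Y : RelativeCat) (f : RelFunctor X Y) (g : RelFunctor Y X)
    (h₁ : NatWEquiv X X (f.F ⋙ g.F) (𝟭 X.C))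
    (h₂ : NatWEquiv Y Y (g.F ⋙ f.F) (𝟭 Y.C))
    (tX : TwoOutOfThree X) (tY : TwoOutOfThree Y)
    {X₁ X₂ : X.C} (x : X₁ ⟶ X₂) :
    X.W x ↔ Y.W (f.F.map x) := by
  constructor
  · exact f.mapW x
  · intro hx
    have hg : X.W ((f.F ⋙ g.F).map x) := g.mapW _ hx
    exact (natWEquiv_iff tX h₁ x).1 hg
end

section
/- For any small category C, the nerve of C and the nerve of its opposite category C^op are weakly homotopy equivalent simplicial sets. -/
open CategoryTheory Simplicial Opposite

/-- A map of topological spaces is a homotopy equivalence if it admits a two-sided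
homotopy inverse. -/
def IsTopHomotopyEquiv {X Y : TopCat} (f : X ⟶ Y) : Prop :=
  ∃ g : Y ⟶ X,
    ContinuousMap.Homotopic (TopCat.Hom.hom (f ≫ g)) (TopCat.Hom.hom (𝟙 X)) ∧
      ContinuousMap.Homotopic (TopCat.Hom.hom (g ≫ f)) (TopCat.Hom.hom (𝟙 Y))

/-- A map of simplicial sets is a weak homotopy equivalence: it induces isomorphisms
on all homotopy groups of geometric realizations; since geometric realizations are
CW complexes this is equivalent (by Whitehead's theorem) to its geometric
realization being a homotopy equivalence, which is how we phrase it. -/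
noncomputable def SSet.IsWeakEquiv {X Y : SSet} (f : X ⟶ Y) : Prop :=
  IsTopHomotopyEquiv (SSet.toTop.map f)

noncomputable section
namespace NerveOp

/-- The order-reversal endofunctor of the simplex category. -/
def rev : SimplexCategory ⥤ SimplexCategory where
  obj x := x
  map {x y} f := SimplexCategory.Hom.mk
    ⟨fun i => (f.toOrderHom i.rev).rev, fun i j h => by
      exact Fin.rev_le_rev.mpr (f.toOrderHom.monotone (Fin.rev_le_rev.mpr h))⟩
  map_id x := by
    apply SimplexCategory.Hom.ext
    ext i
    simp
  map_comp f g := by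
    apply SimplexCategory.Hom.ext
    ext i
    show ((g.toOrderHom (f.toOrderHom i.rev)).rev : ℕ) =
      ((g.toOrderHom (f.toOrderHom i.rev).rev.rev).rev : ℕ)
    rw [Fin.rev_rev]

lemma rev_rev {x y : SimplexCategory} (f : x ⟶ y) : rev.map (rev.map f) = f := by
  apply SimplexCategory.Hom.ext
  ext i
  show ((f.toOrderHom i.rev.rev).rev.rev : ℕ) = (f.toOrderHom i : ℕ)
  rw [Fin.rev_rev, Fin.rev_rev]

/-- Order reversal as an equivalence of the simplex category with itself. -/
def revEquiv : SimplexCategory ≌ SimplexCategory where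
  functor := rev
  inverse := rev
  unitIso := NatIso.ofComponents (fun x => Iso.refl x) (by
    intro x y f
    simp [rev_rev]
    rfl)
  counitIso := NatIso.ofComponents (fun x => Iso.refl x) (by
    intro x y f
    simp [rev_rev]
    rfl)
  functor_unitIso_comp x := by
    apply SimplexCategory.Hom.ext
    ext i
    exact congrArg Fin.val (Fin.rev_rev i)

open SimplexCategory in
/-- Reversing barycentric coordinates of a point of the topological simplex. -/
def revTopObj {x : SimplexCategory} (g : stdSimplex ℝ (Fin (x.len + 1))) :
    stdSimplex ℝ (Fin (x.len + 1)) :=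
  stdSimplex.map Fin.rev g

lemma continuous_revTopObj (x : SimplexCategory) :
    Continuous (revTopObj (x := x)) := by
  exact stdSimplex.continuous_map _

@[simp] lemma revTopObj_revTopObj {x : SimplexCategory} (g : stdSimplex ℝ (Fin (x.len + 1))) :
    revTopObj (revTopObj g) = g := by
  rw [revTopObj, revTopObj, stdSimplex.map_comp_apply]
  have : Fin.rev.comp Fin.rev = (id : Fin (x.len + 1) → Fin (x.len + 1)) := funext Fin.rev_rev
  rw [this, stdSimplex.map_id_apply]

attribute [local instance] CategoryTheory.ConcreteCategory.instFunLike

lemma rev_map_apply {x y : SimplexCategory} (f : x ⟶ y) (k : Fin (x.len + 1)) :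
    rev.map f k = (f k.rev).rev := rfl

open SimplexCategory in
lemma toTopMap_rev {x y : SimplexCategory} (f : x ⟶ y) (g : stdSimplex ℝ (Fin (x.len + 1))) :
    revTopObj (stdSimplex.map (fun k : Fin (x.len + 1) =>
      ((rev.map f).toOrderHom k : Fin (y.len + 1))) g) =
      stdSimplex.map f.toOrderHom (revTopObj g) := by
  rw [revTopObj, revTopObj, stdSimplex.map_comp_apply, stdSimplex.map_comp_apply]
  congr 1
  funext k
  exact Fin.rev_rev _

/-- Coordinate reversal as an isomorphism of the topological simplex. -/
def revTopIso (x : SimplexCategory) :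
    SimplexCategory.toTop.obj x ≅ SimplexCategory.toTop.obj x where
  hom := TopCat.ofHom ⟨fun g => ULift.up (revTopObj g.down),
    continuous_uliftUp.comp ((continuous_revTopObj x).comp continuous_uliftDown)⟩
  inv := TopCat.ofHom ⟨fun g => ULift.up (revTopObj g.down),
    continuous_uliftUp.comp ((continuous_revTopObj x).comp continuous_uliftDown)⟩
  hom_inv_id := by ext g; exact congrArg ULift.up (revTopObj_revTopObj g.down)
  inv_hom_id := by ext g; exact congrArg ULift.up (revTopObj_revTopObj g.down)

/-- Coordinate reversal is a natural isomorphism `rev ⋙ toTop ≅ toTop`. -/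
def toTopRev : rev ⋙ SimplexCategory.toTop ≅ SimplexCategory.toTop :=
  NatIso.ofComponents (fun x => revTopIso x)
    (by
      intro x y f
      ext g
      exact congrArg ULift.up (toTopMap_rev f g.down))

end NerveOp

namespace NerveOp

instance thinOp {D : Type*} [Category D] [∀ a b : D, Subsingleton (a ⟶ b)] (X Y : Dᵒᵖ) :
    Subsingleton (X ⟶ Y) := ⟨fun f g => Quiver.Hom.unop_inj (Subsingleton.elim _ _)⟩

instance thinPreorder {α : Type*} [Preorder α] (a b : α) : Subsingleton (a ⟶ b) :=
  inferInstanceAs (Subsingleton (ULift (PLift _)))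

lemma map_eq_of_thin {J : Type*} [Category J] [∀ a b : J, Subsingleton (a ⟶ b)] {D : Type*}
    [Category D] (F : J ⥤ D) {a b a' b' : J} (ha : a' = a) (hb : b = b')
    (f : a ⟶ b) (g : a' ⟶ b') :
    F.map g = eqToHom (by rw [ha]) ≫ F.map f ≫ eqToHom (by rw [hb]) := by
  subst ha; subst hb
  rw [Subsingleton.elim g (eqToHom rfl ≫ f ≫ eqToHom rfl)]
  simp

/-- Reversal functor on the linear order `Fin (n+1)` viewed as a category. -/
def finRev (n : ℕ) : Fin (n + 1) ⥤ (Fin (n + 1))ᵒᵖ where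
  obj i := op i.rev
  map {i j} h := (homOfLE (Fin.rev_le_rev.mpr (leOfHom h))).op
  map_id _ := Subsingleton.elim _ _
  map_comp _ _ := Subsingleton.elim _ _

variable {C : Type} [SmallCategory C]

/-- Reverse a composable chain of arrows in `Cᵒᵖ`, giving a chain in `C`. -/
def Φ {n : ℕ} (F : Fin (n + 1) ⥤ Cᵒᵖ) : Fin (n + 1) ⥤ C := finRev n ⋙ F.leftOp

/-- Reverse a composable chain of arrows in `C`, giving a chain in `Cᵒᵖ`. -/
def Ψ {n : ℕ} (G : Fin (n + 1) ⥤ C) : Fin (n + 1) ⥤ Cᵒᵖ := finRev n ⋙ G.op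

lemma psi_phi {n : ℕ} (F : Fin (n + 1) ⥤ Cᵒᵖ) : Ψ (Φ F) = F := by
  have hobj : ∀ i, (Ψ (Φ F)).obj i = F.obj i := fun i => by simp [Ψ, Φ, finRev]
  exact CategoryTheory.Functor.ext hobj (fun i j f => by refine map_eq_of_thin F ?_ ?_ f _ <;> simp [finRev])

lemma phi_psi {n : ℕ} (G : Fin (n + 1) ⥤ C) : Φ (Ψ G) = G := by
  have hobj : ∀ i, (Φ (Ψ G)).obj i = G.obj i := fun i => by simp [Ψ, Φ, finRev]
  exact CategoryTheory.Functor.ext hobj (fun i j f => by refine map_eq_of_thin G ?_ ?_ f _ <;> simp [finRev])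

end NerveOp

namespace NerveOp

variable (C : Type) [SmallCategory C]

lemma toCat_map_obj {x y : SimplexCategory} (g : x ⟶ y) (i : Fin (x.len + 1)) :
    (SimplexCategory.toCat.map g).toFunctor.obj i = g.toOrderHom i := rfl

/-- The nerve of `Cᵒᵖ` is the reversal of the nerve of `C`. -/
def nerveIso : nerve Cᵒᵖ ≅ rev.op ⋙ nerve C :=
  NatIso.ofComponents
    (fun x => { hom := TypeCat.ofHom fun F => Φ F
                inv := TypeCat.ofHom fun G => Ψ G
                hom_inv_id := by ext F; exact psi_phi F
                inv_hom_id := by ext G; exact phi_psi G })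
    (by
      intro x y g
      ext F
      show Φ ((nerve Cᵒᵖ).map g F) = (nerve C).map (rev.op.map g) (Φ F)
      have hobj : ∀ i, (Φ ((nerve Cᵒᵖ).map g F)).obj i
          = ((nerve C).map (rev.op.map g) (Φ F)).obj i := by
        intro i
        show unop (F.obj ((g.unop.toOrderHom i.rev))) =
          unop (F.obj (((rev.map g.unop).toOrderHom i).rev))
        exact congrArg (fun j => unop (F.obj j)) (Fin.rev_rev _).symm
      exact CategoryTheory.Functor.ext hobj
        (fun i j f => by refine map_eq_of_thin F.leftOp ?_ ?_ _ _ <;> first | (exact congrArg op (Fin.rev_rev _).symm) | (exact congrArg op (Fin.rev_rev _))))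

end NerveOp

namespace NerveOp

/-- The auto-equivalence of `SSet` given by simplicial reversal. -/
def E : SSet ≌ SSet := revEquiv.op.congrLeft

def rAux : TopCat.toSSet ⋙ E.inverse ≅
    uliftYoneda.{0} ⋙ (Functor.whiskeringLeft _ _ Type).obj ((rev ⋙ SimplexCategory.toTop).op) :=
  Iso.refl _

def rIso : TopCat.toSSet ⋙ E.inverse ≅ TopCat.toSSet :=
  rAux ≪≫ Functor.isoWhiskerLeft uliftYoneda.{0} ((Functor.whiskeringLeft _ _ _).mapIso (NatIso.op toTopRev).symm)

def adj2 : E.functor ⋙ SSet.toTop ⊣ TopCat.toSSet :=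
  (E.toAdjunction.comp sSetTopAdj).ofNatIsoRight rIso

def leftIso : E.functor ⋙ SSet.toTop ≅ SSet.toTop :=
  Adjunction.leftAdjointUniq adj2 sSetTopAdj

def fIso (C : Type) [SmallCategory C] :
    SSet.toTop.obj (nerve C) ≅ SSet.toTop.obj (nerve Cᵒᵖ) :=
  (leftIso.app (nerve C)).symm ≪≫ (SSet.toTop.mapIso (nerveIso C)).symm

end NerveOp


/-- For any small category `C`, the nerve of `C` and the nerve of `Cᵒᵖ` are weakly
homotopy equivalent simplicial sets: there is a map between their geometric
realizations which is a (weak, equivalently by Whitehead's theorem an actual)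
homotopy equivalence. -/
theorem nerve_op_weaklyEquivalent (C : Type) [SmallCategory C] :
    ∃ f : SSet.toTop.obj (nerve C) ⟶ SSet.toTop.obj (nerve Cᵒᵖ),
      IsTopHomotopyEquiv f := by
  refine ⟨(NerveOp.fIso C).hom, (NerveOp.fIso C).inv, ?_, ?_⟩
  · rw [Iso.hom_inv_id]
  · rw [Iso.inv_hom_id]
end
end

section
/- Let A be a simplicial category and k ≥ 0. The assignment sending an object ((p₀,A₀) → ⋯ → (p_k,A_k)) of (YA)_k, with morphisms (t_i, a_i), to the object ((p_k, A₀) → ⋯ → (p_k, A_k)) with morphisms (id, t_k⋯t_{i+1} a_i), together with the evident comparison map built from (t_k⋯t_1, id), ..., (id, id), defines a functor r : (YA)_k → (Ȳ A)_k and a natural transformation from the identity of (YA)_k to the inclusion ∘ r, exhibiting (Ȳ A)_k as a deformation retract; in particular the inclusion (Ȳ A)_k ⊆ (YA)_k induces a homotopy equivalence of nerves. -/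
open CategoryTheory Opposite

/-- A (small) simplicial category with fixed object set `O`, presented as the
equivalent data of a simplicial diagram of categories `A_•` all having object
set `O`, on which the simplicial operators act as the identity on objects:
for each pair of objects a hom simplicial set, together with level-wise
identities and compositions which are compatible with the simplicial operators. -/
structure SCat where
  O : Type
  H : O → O → SSet
  ident : ∀ (X : O) (p : SimplexCategoryᵒᵖ), (H X X).obj p
  comp : ∀ {X Y Z : O} {p : SimplexCategoryᵒᵖ},
    (H X Y).obj p → (H Y Z).obj p → (H X Z).obj p
  id_comp : ∀ {X Y : O} {p : SimplexCategoryᵒᵖ} (f : (H X Y).obj p),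
    comp (ident X p) f = f
  comp_id : ∀ {X Y : O} {p : SimplexCategoryᵒᵖ} (f : (H X Y).obj p),
    comp f (ident Y p) = f
  assoc : ∀ {W X Y Z : O} {p : SimplexCategoryᵒᵖ} (f : (H W X).obj p)
    (g : (H X Y).obj p) (h : (H Y Z).obj p),
    comp (comp f g) h = comp f (comp g h)
  comp_natural : ∀ {X Y Z : O} {p q : SimplexCategoryᵒᵖ} (t : p ⟶ q)
    (f : (H X Y).obj p) (g : (H Y Z).obj p),
    (H X Z).map t (comp f g) = comp ((H X Y).map t f) ((H Y Z).map t g)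
  ident_natural : ∀ (X : O) {p q : SimplexCategoryᵒᵖ} (t : p ⟶ q),
    (H X X).map t (ident X p) = ident X q

namespace SCat

variable (A : SCat)

/-- Objects of the Grothendieck construction `bA`: pairs `(p, A)` of a simplicial
dimension and an object of `A`. -/
structure BObj where
  p : SimplexCategoryᵒᵖ
  pt : A.O

variable {A}

/-- Morphisms `(p₁, A₁) → (p₂, A₂)` of the Grothendieck construction `bA`: pairs
`(t, a)` where `t : [p₂] → [p₁]` in `Δ` (i.e. `p₁ ⟶ p₂` in `Δᵒᵖ`) and
`a : t* A₁ = A₁ → A₂` is a morphism of `A_{p₂}`. -/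
structure BHom (X Y : A.BObj) where
  t : X.p ⟶ Y.p
  a : (A.H X.pt Y.pt).obj Y.p

/-- The identity morphism `(id, id)` of `bA`. -/
def bId (X : A.BObj) : BHom X X :=
  ⟨𝟙 X.p, A.ident X.pt X.p⟩

/-- The composition `(t', a') ∘ (t, a) = (t' t, a' ∘ (t'* a))` of `bA`. -/
def bComp {X Y Z : A.BObj} (f : BHom X Y) (g : BHom Y Z) : BHom X Z :=
  ⟨f.t ≫ g.t, A.comp ((A.H X.pt Y.pt).map g.t f.a) g.a⟩

end SCat

namespace SCat

variable {A : SCat}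

/-- The Grothendieck construction `bA` as a category. -/
instance : Category A.BObj where
  Hom := BHom
  id := bId
  comp := bComp
  id_comp f := by
    cases f with
    | mk t a => simp [bId, bComp, A.ident_natural, A.id_comp]
  comp_id f := by
    cases f with
    | mk t a => simp [bId, bComp, A.comp_id]
  assoc f g h := by
    simp [bComp, A.comp_natural, A.assoc, FunctorToTypes.map_comp_apply]

/-- A morphism of `bA` is "of the form `(t, id)`" if its second component is an
identity of `A` (which forces the underlying objects of `A` to agree). -/
def IsIdMap {X Y : A.BObj} (f : X ⟶ Y) : Prop :=
  ∃ _ : X.pt = Y.pt, HEq (BHom.a f) (A.ident X.pt Y.p)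

lemma isIdMap_id (X : A.BObj) : IsIdMap (𝟙 X) := ⟨rfl, HEq.rfl⟩

lemma isIdMap_comp {X Y Z : A.BObj} {f : X ⟶ Y} {g : Y ⟶ Z}
    (hf : IsIdMap f) (hg : IsIdMap g) : IsIdMap (f ≫ g) := by
  obtain ⟨px, x⟩ := X; obtain ⟨py, y⟩ := Y; obtain ⟨pz, z⟩ := Z
  obtain ⟨t, a⟩ := f; obtain ⟨s, b⟩ := g
  obtain ⟨h₁, e₁⟩ := hf; obtain ⟨h₂, e₂⟩ := hg
  dsimp at h₁ h₂ e₁ e₂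
  subst h₁; subst h₂
  refine ⟨rfl, ?_⟩
  cases e₁; cases e₂
  show HEq (A.comp ((A.H x x).map s (A.ident x py)) (A.ident x pz)) _
  rw [A.ident_natural, A.comp_id]

end SCat

namespace SCat

variable (A : SCat)

/-- The category `(YA)_k`: objects are `k`-chains of composable morphisms of the
Grothendieck construction `bA`, morphisms are commutative ladders in `bA` all of
whose vertical maps are of the form `(u, id)`. -/
def YObj (k : ℕ) : Type := Fin (k + 1) ⥤ A.BObj

instance (k : ℕ) : Category (YObj A k) where
  Hom C D := {η : NatTrans C D // ∀ i : Fin (k + 1), IsIdMap (η.app i)}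
  id C := ⟨NatTrans.id C, fun i => isIdMap_id _⟩
  comp f g := ⟨NatTrans.vcomp f.1 g.1, fun i => isIdMap_comp (f.2 i) (g.2 i)⟩
  id_comp f := by apply Subtype.ext; ext i; exact Category.id_comp _
  comp_id f := by apply Subtype.ext; ext i; exact Category.comp_id _
  assoc f g h := by apply Subtype.ext; ext i; exact Category.assoc _ _ _

/-- A chain is constant if all of its structure operators `t_i` are identities
(hence all the simplicial dimensions `p_i` agree). -/
def IsConstChain {k : ℕ} (C : YObj A k) : Prop :=
  ∀ {i j : Fin (k + 1)} (f : i ⟶ j),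
    ∃ h : (C.obj i).p = (C.obj j).p, BHom.t (C.map f) = eqToHom h

/-- The category `(ȲA)_k ⊆ (YA)_k`: the full subcategory of constant chains. -/
def YbarObj (k : ℕ) : Type := ObjectProperty.FullSubcategory (IsConstChain A (k := k))

instance (k : ℕ) : Category (YbarObj A k) :=
  ObjectProperty.FullSubcategory.category _

/-- The inclusion `(ȲA)_k ⊆ (YA)_k`. -/
def yInclusion (k : ℕ) : YbarObj A k ⥤ YObj A k :=
  ObjectProperty.ι _

end SCat

open Simplicial

namespace SSet

/-- The constant map to a vertex of `Δ[1]`. -/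
def constMap (X : SSet) (k : Fin 2) : X ⟶ Δ[1] where
  app m := TypeCat.ofHom (fun _ => SSet.stdSimplex.const 1 k m)

/-- The cylinder `X × Δ[1]` on a simplicial set. -/
noncomputable def cyl (X : SSet) : SSet := Limits.prod X Δ[1]

/-- The two ends of the cylinder. -/
noncomputable def cylEnd (X : SSet) (k : Fin 2) : X ⟶ cyl X :=
  Limits.prod.lift (𝟙 X) (constMap X k)

/-- An elementary simplicial homotopy from `f` to `g`. -/
noncomputable def SHomotopy {X Y : SSet} (f g : X ⟶ Y) : Prop :=
  ∃ H : cyl X ⟶ Y, cylEnd X 0 ≫ H = f ∧ cylEnd X 1 ≫ H = g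

/-- Simplicially homotopic maps: connected by a finite chain of elementary
simplicial homotopies. -/
noncomputable def SHomotopic {X Y : SSet} (f g : X ⟶ Y) : Prop :=
  Relation.EqvGen SHomotopy f g

end SSet

open SCat
namespace SCat

variable {A : SCat} {k : ℕ}

lemma BHom.ext' {X Y : A.BObj} {f g : BHom X Y} (ht : f.t = g.t) (ha : f.a = g.a) :
    f = g := by
  cases f; cases g; cases ht; cases ha; rfl

@[simp] lemma t_comp {X Y Z : A.BObj} (f : X ⟶ Y) (g : Y ⟶ Z) :
    BHom.t (f ≫ g) = BHom.t f ≫ BHom.t g := rfl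

@[simp] lemma a_comp {X Y Z : A.BObj} (f : X ⟶ Y) (g : Y ⟶ Z) :
    BHom.a (f ≫ g) = A.comp ((A.H _ _).map (BHom.t g) (BHom.a f)) (BHom.a g) := rfl

@[simp] lemma t_id (X : A.BObj) : BHom.t (𝟙 X) = 𝟙 X.p := rfl

@[simp] lemma a_id (X : A.BObj) : BHom.a (𝟙 X) = A.ident X.pt X.p := rfl

/-- The composite structure map from level `j` to the last level. -/
def sM (C : YObj A k) (j : Fin (k + 1)) : (C.obj j).p ⟶ (C.obj (Fin.last k)).p :=
  BHom.t (C.map (homOfLE (Fin.le_last j)))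

lemma sM_comp (C : YObj A k) {i j : Fin (k + 1)} (f : i ⟶ j) :
    BHom.t (C.map f) ≫ sM C j = sM C i := by
  unfold sM
  rw [show homOfLE (Fin.le_last i) = f ≫ homOfLE (Fin.le_last j) by
    rw [← homOfLE_leOfHom f, homOfLE_comp], C.map_comp]
  rfl

lemma t_nat {C D : YObj A k} (u : NatTrans C D) {i j : Fin (k + 1)} (f : i ⟶ j) :
    BHom.t (C.map f) ≫ BHom.t (u.app j) = BHom.t (u.app i) ≫ BHom.t (D.map f) :=
  congrArg BHom.t (u.naturality f)

lemma a_nat {C D : YObj A k} (u : NatTrans C D) {i j : Fin (k + 1)} (f : i ⟶ j) :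
    A.comp ((A.H _ _).map (BHom.t (u.app j)) (BHom.a (C.map f))) (BHom.a (u.app j)) =
      A.comp ((A.H _ _).map (BHom.t (D.map f)) (BHom.a (u.app i))) (BHom.a (D.map f)) :=
  congrArg BHom.a (u.naturality f)

lemma sM_t_nat {C D : YObj A k} (u : NatTrans C D) (j : Fin (k + 1)) :
    sM C j ≫ BHom.t (u.app (Fin.last k)) = BHom.t (u.app j) ≫ sM D j :=
  t_nat u (homOfLE (Fin.le_last j))

/-- The constant chain at `(C.obj (Fin.last k)).p` associated to a chain `C`. -/
def rChain (C : YObj A k) : YObj A k where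
  obj j := ⟨(C.obj (Fin.last k)).p, (C.obj j).pt⟩
  map {i j} f :=
    (BHom.mk (𝟙 _) ((A.H _ _).map (sM C j) (BHom.a (C.map f))) :
      BHom ⟨(C.obj (Fin.last k)).p, (C.obj i).pt⟩ ⟨(C.obj (Fin.last k)).p, (C.obj j).pt⟩)
  map_id j := by
    apply BHom.ext'
    · rfl
    · show (A.H _ _).map (sM C j) (BHom.a (C.map (𝟙 j))) = A.ident _ _
      rw [C.map_id]
      show (A.H _ _).map (sM C j) (A.ident _ _) = _
      rw [A.ident_natural]
  map_comp {i j l} f g := by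
    apply BHom.ext'
    · show 𝟙 _ = 𝟙 _ ≫ 𝟙 _
      simp
    · show (A.H _ _).map (sM C l) (BHom.a (C.map (f ≫ g))) = _
      rw [C.map_comp]
      show (A.H _ _).map (sM C l)
          (A.comp ((A.H _ _).map (BHom.t (C.map g)) (BHom.a (C.map f))) (BHom.a (C.map g))) = _
      rw [A.comp_natural, ← FunctorToTypes.map_comp_apply, sM_comp]
      show _ = A.comp ((A.H _ _).map (𝟙 _)
          ((A.H _ _).map (sM C j) (BHom.a (C.map f)))) ((A.H _ _).map (sM C l) (BHom.a (C.map g)))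
      rw [FunctorToTypes.map_id_apply]

lemma rChain_isConst (C : YObj A k) : IsConstChain A (rChain C) :=
  fun {i j} f => ⟨rfl, rfl⟩

end SCat
namespace SCat

variable {A : SCat} {k : ℕ}

/-- Component of `r` on morphisms. -/
def rMapApp {C D : YObj A k} (u : C ⟶ D) (j : Fin (k + 1)) :
    BHom ((rChain C).obj j) ((rChain D).obj j) :=
  BHom.mk (BHom.t (X := C.obj (Fin.last k)) (Y := D.obj (Fin.last k)) (u.1.app (Fin.last k)))
    ((A.H _ _).map (sM D j) (BHom.a (u.1.app j)))

lemma rMapApp_natural {C D : YObj A k} (u : C ⟶ D) {i j : Fin (k + 1)} (f : i ⟶ j) :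
    (rChain C).map f ≫ (rMapApp u j : (rChain C).obj j ⟶ (rChain D).obj j) =
      (rMapApp u i : (rChain C).obj i ⟶ (rChain D).obj i) ≫ (rChain D).map f := by
  apply BHom.ext'
  · have : 𝟙 ((C.obj (Fin.last k)).p) ≫ BHom.t (u.1.app (Fin.last k)) =
        BHom.t (u.1.app (Fin.last k)) ≫ 𝟙 ((D.obj (Fin.last k)).p) := by simp
    exact this
  · have : A.comp ((A.H _ _).map (BHom.t (u.1.app (Fin.last k)))
          ((A.H _ _).map (sM C j) (BHom.a (C.map f))))
          ((A.H _ _).map (sM D j) (BHom.a (u.1.app j))) =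
        A.comp ((A.H _ _).map (𝟙 ((D.obj (Fin.last k)).p))
            ((A.H _ _).map (sM D i) (BHom.a (u.1.app i))))
          ((A.H _ _).map (sM D j) (BHom.a (D.map f))) := by
      rw [FunctorToTypes.map_id_apply, ← FunctorToTypes.map_comp_apply, sM_t_nat u.1 j,
        FunctorToTypes.map_comp_apply, ← A.comp_natural, a_nat u.1 f, A.comp_natural,
        ← FunctorToTypes.map_comp_apply, sM_comp]
    exact this

lemma isIdMap_mk_map {x y : A.O} (h : x = y) {p Pc Pd : SimplexCategoryᵒᵖ} (t : Pc ⟶ Pd)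
    (s : p ⟶ Pd) (a : (A.H x y).obj p) (ha : HEq a (A.ident x p)) :
    IsIdMap (X := ⟨Pc, x⟩) (Y := ⟨Pd, y⟩) (BHom.mk t ((A.H x y).map s a)) := by
  subst h
  refine ⟨rfl, ?_⟩
  rw [eq_of_heq ha, A.ident_natural]

lemma rMapApp_isIdMap {C D : YObj A k} (u : C ⟶ D) (j : Fin (k + 1)) :
    IsIdMap (X := (rChain C).obj j) (Y := (rChain D).obj j) (rMapApp u j) := by
  obtain ⟨h, e⟩ := u.2 j
  exact isIdMap_mk_map h _ _ _ e

/-- The retraction functor `r : (YA)_k ⥤ (ȲA)_k`. -/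
def yr : YObj A k ⥤ YbarObj A k where
  obj C := ⟨rChain C, rChain_isConst C⟩
  map {C D} u := ⟨⟨fun j => rMapApp u j, fun {i j} f => rMapApp_natural u f⟩,
    fun j => rMapApp_isIdMap u j⟩
  map_id C := by
    apply ObjectProperty.hom_ext; apply Subtype.ext; apply NatTrans.ext; funext j
    apply BHom.ext'
    · rfl
    · exact A.ident_natural (C.obj j).pt (sM C j)
  map_comp {C D E} u v := by
    apply ObjectProperty.hom_ext; apply Subtype.ext; apply NatTrans.ext; funext j
    apply BHom.ext'
    · rfl
    · have : (A.H _ _).map (sM E j)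
          (A.comp ((A.H _ _).map (BHom.t (v.1.app j)) (BHom.a (u.1.app j))) (BHom.a (v.1.app j))) =
        A.comp ((A.H _ _).map (BHom.t (v.1.app (Fin.last k)))
            ((A.H _ _).map (sM D j) (BHom.a (u.1.app j))))
          ((A.H _ _).map (sM E j) (BHom.a (v.1.app j))) := by
        rw [A.comp_natural, ← FunctorToTypes.map_comp_apply, ← sM_t_nat v.1 j,
          FunctorToTypes.map_comp_apply]
      exact this

/-- The components of `η C` as a cocone-like ladder. -/
def etaAppApp (C : YObj A k) (j : Fin (k + 1)) : BHom (C.obj j) ((rChain C).obj j) :=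
  BHom.mk (sM C j) (A.ident (C.obj j).pt ((C.obj (Fin.last k)).p))

lemma etaApp_nat (C : YObj A k) {i j : Fin (k + 1)} (f : i ⟶ j) :
    C.map f ≫ (etaAppApp C j : C.obj j ⟶ (rChain C).obj j) =
      (etaAppApp C i : C.obj i ⟶ (rChain C).obj i) ≫ (rChain C).map f := by
  apply BHom.ext'
  · have : BHom.t (C.map f) ≫ sM C j = sM C i ≫ 𝟙 ((C.obj (Fin.last k)).p) := by
      rw [sM_comp, Category.comp_id]
    exact this
  · have : A.comp ((A.H _ _).map (sM C j) (BHom.a (C.map f)))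
        (A.ident (C.obj j).pt ((C.obj (Fin.last k)).p)) =
      A.comp ((A.H _ _).map (𝟙 ((C.obj (Fin.last k)).p))
          (A.ident (C.obj i).pt ((C.obj (Fin.last k)).p)))
        ((A.H _ _).map (sM C j) (BHom.a (C.map f))) := by
      rw [A.comp_id, FunctorToTypes.map_id_apply, A.id_comp]
    exact this

/-- Component of the natural transformation `η`. -/
def etaApp (C : YObj A k) : C ⟶ (rChain C : YObj A k) :=
  ⟨⟨fun j => etaAppApp C j, fun {i j} f => etaApp_nat C f⟩, fun j => ⟨rfl, HEq.rfl⟩⟩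

/-- The deformation retraction `η : 𝟭 ⟶ r ⋙ incl`. -/
def yeta : 𝟭 (YObj A k) ⟶ yr ⋙ yInclusion A k where
  app C := etaApp C
  naturality C D u := by
    apply Subtype.ext; apply NatTrans.ext; funext j
    apply BHom.ext'
    · have : BHom.t (u.1.app j) ≫ sM D j = sM C j ≫ BHom.t (u.1.app (Fin.last k)) :=
        (sM_t_nat u.1 j).symm
      exact this
    · have : A.comp ((A.H _ _).map (sM D j) (BHom.a (u.1.app j)))
          (A.ident (D.obj j).pt ((D.obj (Fin.last k)).p)) =
        A.comp ((A.H _ _).map (BHom.t (u.1.app (Fin.last k)))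
            (A.ident (C.obj j).pt ((C.obj (Fin.last k)).p)))
          ((A.H _ _).map (sM D j) (BHom.a (u.1.app j))) := by
        rw [A.comp_id, A.ident_natural, A.id_comp]
      exact this

end SCat
namespace SCat

variable {A : SCat} {k : ℕ}

lemma BObj.ext' {X Y : A.BObj} (hp : X.p = Y.p) (hpt : X.pt = Y.pt) : X = Y := by
  cases X; cases Y; cases hp; cases hpt; rfl

lemma BHom.hext {X Y X' Y' : A.BObj} (hX : X = X') (hY : Y = Y')
    {f : BHom X Y} {g : BHom X' Y'} (ht : HEq f.t g.t) (ha : HEq f.a g.a) : HEq f g := by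
  subst hX; subst hY
  cases f; cases g
  cases ht; cases ha; rfl

lemma heq_id_eqToHom {T : Type*} [Category T] {a b c : T} (h1 : a = c) (h2 : b = c)
    (hab : a = b) : HEq (𝟙 c) (eqToHom hab) := by
  subst h1; subst h2; simp

lemma heq_map_eqToHom {X : SSet} {p q : SimplexCategoryᵒᵖ} (h : p = q) (a : X.obj p) :
    HEq (X.map (eqToHom h) a) a := by
  subst h; simp

lemma ident_heq (x : A.O) {p q : SimplexCategoryᵒᵖ} (h : p = q) :
    HEq (A.ident x p) (A.ident x q) := by subst h; rfl

lemma heq_of_conj {T : Type*} [Category T] {a b c d : T} (h1 : a = c) (h2 : b = d)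
    (f : a ⟶ b) (g : c ⟶ d) (hfg : f ≫ eqToHom h2 = eqToHom h1 ≫ g) : HEq f g := by
  subst h1; subst h2; simpa using hfg

/-- On constant chains, `rChain` is the identity. -/
lemma rChain_eq_of_const {C : YObj A k} (hC : IsConstChain A C) : rChain C = C := by
  have hobj : ∀ j, (rChain C).obj j = C.obj j := fun j =>
    BObj.ext' ((hC (homOfLE (Fin.le_last j))).choose).symm rfl
  refine Functor.hext hobj fun i j f => ?_
  obtain ⟨hij, hf⟩ := hC f
  obtain ⟨hj, hj'⟩ := hC (homOfLE (Fin.le_last j))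
  obtain ⟨hi, hi'⟩ := hC (homOfLE (Fin.le_last i))
  refine BHom.hext (hobj i) (hobj j) ?_ ?_
  · have : HEq (𝟙 ((C.obj (Fin.last k)).p)) (BHom.t (C.map f)) := by
      rw [hf]; exact heq_id_eqToHom hi hj hij
    exact this
  · have : HEq ((A.H (C.obj i).pt (C.obj j).pt).map (sM C j) (BHom.a (C.map f)))
        (BHom.a (C.map f)) := by
      rw [show sM C j = eqToHom hj from hj']
      exact heq_map_eqToHom hj _
    exact this

lemma yhom_hext {C C' D D' : YObj A k} (hC : C = C') (hD : D = D') (u : C ⟶ D) (v : C' ⟶ D')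
    (h : ∀ j, HEq (u.1.app j) (v.1.app j)) : HEq u v := by
  subst hC; subst hD
  exact heq_of_eq (Subtype.ext (NatTrans.ext (funext fun j => eq_of_heq (h j))))

lemma fullsub_ext {D E : YbarObj A k} (h : D.obj = E.obj) : D = E := by
  cases D; cases E; cases h; rfl

lemma ybar_hom_hext {D D' E E' : YbarObj A k} (hD : D = D') (hE : E = E') (u : D ⟶ E)
    (v : D' ⟶ E') (h : HEq u.hom v.hom) : HEq u v := by
  subst hD; subst hE
  exact heq_of_eq (ObjectProperty.hom_ext _ (eq_of_heq h))

/-- The retraction equation `incl ⋙ r = 𝟭`. -/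
theorem incl_comp_yr : yInclusion A k ⋙ yr = 𝟭 (YbarObj A k) := by
  have hobj : ∀ D : YbarObj A k, (yr.obj D.obj : YbarObj A k) = D := fun D =>
    fullsub_ext (rChain_eq_of_const D.2)
  refine Functor.hext hobj fun D E u => ?_
  have hrc : ∀ D : YbarObj A k, rChain D.obj = D.obj := fun D => rChain_eq_of_const D.2
  refine ybar_hom_hext (hobj D) (hobj E) _ u ?_
  refine yhom_hext (hrc D) (hrc E) _ u.hom fun j => ?_
  -- HEq (rMapApp u j) (u.hom.1.app j)
  obtain ⟨hj, hj'⟩ := E.2 (homOfLE (Fin.le_last j))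
  obtain ⟨hjc, hjc'⟩ := D.2 (homOfLE (Fin.le_last j))
  refine BHom.hext (congrArg (fun (X : YObj A k) => X.obj j) (hrc D))
    (congrArg (fun (X : YObj A k) => X.obj j) (hrc E)) ?_ ?_
  · -- HEq (t (u.app last)) (t (u.app j))
    refine (heq_of_conj hjc hj (BHom.t (u.hom.1.app j)) (BHom.t (u.hom.1.app (Fin.last k))) ?_).symm
    rw [← hj', ← hjc']
    exact (sM_t_nat u.hom.1 j).symm
  · have : HEq ((A.H (D.obj.obj j).pt (E.obj.obj j).pt).map (sM E.obj j) (BHom.a (u.hom.1.app j)))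
        (BHom.a (u.hom.1.app j)) := by
      rw [show sM E.obj j = eqToHom hj from hj']
      exact heq_map_eqToHom hj _
    exact this

/-- `η` is the identity on constant chains. -/
theorem etaApp_const (D : YbarObj A k) :
    HEq (etaApp ((yInclusion A k).obj D)) (𝟙 ((yInclusion A k).obj D)) := by
  refine yhom_hext rfl (rChain_eq_of_const D.2) _ (𝟙 _) fun j => ?_
  obtain ⟨hj, hj'⟩ := D.2 (homOfLE (Fin.le_last j))
  refine BHom.hext rfl (congrArg (fun (X : YObj A k) => X.obj j) (rChain_eq_of_const D.2)) ?_ ?_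
  · have : HEq (sM ((yInclusion A k).obj D) j) (𝟙 ((((yInclusion A k).obj D).obj j).p)) := by
      rw [show sM ((yInclusion A k).obj D) j = eqToHom hj from hj']
      exact (heq_id_eqToHom rfl hj.symm hj).symm
    exact this
  · exact ident_heq _ hj.symm

end SCat
namespace SSet

open CategoryTheory Limits Simplicial

/-- Pointwise product of simplicial sets. -/
def ptProd (X Y : SSet.{0}) : SSet where
  obj m := X.obj m × Y.obj m
  map f := TypeCat.ofHom (fun p => (X.map f p.1, Y.map f p.2))
  map_id m := by ext p <;> simp
  map_comp f g := by ext p <;> simp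

def ptFst (X Y : SSet.{0}) : ptProd X Y ⟶ X :=
  { app := fun m => TypeCat.ofHom (fun p => p.1), naturality := fun _ _ _ => rfl }

def ptSnd (X Y : SSet.{0}) : ptProd X Y ⟶ Y :=
  { app := fun m => TypeCat.ofHom (fun p => p.2), naturality := fun _ _ _ => rfl }

def ptCone (X Y : SSet.{0}) : BinaryFan X Y := BinaryFan.mk (ptFst X Y) (ptSnd X Y)

def ptIsLimit (X Y : SSet.{0}) : IsLimit (ptCone X Y) :=
  BinaryFan.isLimitMk
    (fun s => { app := fun m => TypeCat.ofHom (fun x => (s.fst.app m x, s.snd.app m x)),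
                naturality := fun m₁ m₂ f => by
                  refine ConcreteCategory.hom_ext _ _ fun x => ?_
                  have n1 := ConcreteCategory.congr_hom (s.fst.naturality f) x
                  have n2 := ConcreteCategory.congr_hom (s.snd.naturality f) x
                  exact Prod.ext n1 n2 })
    (fun s => rfl) (fun s => rfl)
    (fun s u h1 h2 => by
      apply NatTrans.ext; funext m; refine ConcreteCategory.hom_ext _ _ fun x => ?_
      have n1 := ConcreteCategory.congr_hom (congrArg (fun t => NatTrans.app t m) h1) x
      have n2 := ConcreteCategory.congr_hom (congrArg (fun t => NatTrans.app t m) h2) x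
      exact Prod.ext n1 n2)

noncomputable def cylIso (X : SSet.{0}) : cyl X ≅ ptProd X Δ[1] :=
  limit.isoLimitCone ⟨ptCone X Δ[1], ptIsLimit X Δ[1]⟩

def ptEnd (X : SSet.{0}) (i : Fin 2) : X ⟶ ptProd X Δ[1] where
  app m := TypeCat.ofHom (fun x => (x, stdSimplex.const 1 i m))
  naturality m₁ m₂ f := by rfl

lemma cylEnd_cylIso (X : SSet.{0}) (i : Fin 2) :
    cylEnd X i ≫ (cylIso X).hom = ptEnd X i := by
  have h1 : (cylIso X).hom ≫ ptFst X Δ[1] = Limits.prod.fst :=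
    limit.isoLimitCone_hom_π ⟨ptCone X Δ[1], ptIsLimit X Δ[1]⟩ ⟨WalkingPair.left⟩
  have h2 : (cylIso X).hom ≫ ptSnd X Δ[1] = Limits.prod.snd :=
    limit.isoLimitCone_hom_π ⟨ptCone X Δ[1], ptIsLimit X Δ[1]⟩ ⟨WalkingPair.right⟩
  have e1 : cylEnd X i ≫ (cylIso X).hom ≫ ptFst X Δ[1] = 𝟙 X := by
    rw [h1]; exact prod.lift_fst _ _
  have e2 : cylEnd X i ≫ (cylIso X).hom ≫ ptSnd X Δ[1] = constMap X i := by
    rw [h2]; exact prod.lift_snd _ _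
  apply NatTrans.ext; funext m; refine ConcreteCategory.hom_ext _ _ fun x => ?_
  refine Prod.ext ?_ ?_
  · exact ConcreteCategory.congr_hom (congrArg (fun t => NatTrans.app t m) e1) x
  · exact ConcreteCategory.congr_hom (congrArg (fun t => NatTrans.app t m) e2) x

lemma shomotopy_of_pt {X Y : SSet.{0}} {f g : X ⟶ Y} (H : ptProd X Δ[1] ⟶ Y)
    (h0 : ptEnd X 0 ≫ H = f) (h1 : ptEnd X 1 ≫ H = g) : SHomotopy f g :=
  ⟨(cylIso X).hom ≫ H, by rw [← Category.assoc, cylEnd_cylIso, h0],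
    by rw [← Category.assoc, cylEnd_cylIso, h1]⟩

end SSet
namespace NerveHtpy

open CategoryTheory Simplicial

variable {C D : Type} [Category.{0} C] [Category.{0} D] (F G : C ⥤ D) (α : F ⟶ G)

def pt (i : Fin 2) (x : C) : D := if i = 0 then F.obj x else G.obj x

lemma pt_eq_F {i : Fin 2} (h : i = 0) (x : C) : pt F G i x = F.obj x := by
  rw [pt, if_pos h]

lemma pt_eq_G {i : Fin 2} (h : i ≠ 0) (x : C) : pt F G i x = G.obj x := by
  rw [pt, if_neg h]

lemma ne_zero_of_le {i j : Fin 2} (hij : i ≤ j) (hi : i ≠ 0) : j ≠ 0 :=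
  fun h => hi (Fin.le_zero_iff.mp (h ▸ hij))

/-- The pieces of the homotopy on arrows. -/
def ar {x y : C} (f : x ⟶ y) (i j : Fin 2) (hij : i ≤ j) : pt F G i x ⟶ pt F G j y :=
  if hi : i = 0 then
    if hj : j = 0 then
      eqToHom (pt_eq_F F G hi x) ≫ F.map f ≫ eqToHom (pt_eq_F F G hj y).symm
    else
      eqToHom (pt_eq_F F G hi x) ≫ F.map f ≫ α.app y ≫ eqToHom (pt_eq_G F G hj y).symm
  else
    eqToHom (pt_eq_G F G hi x) ≫ G.map f ≫
      eqToHom (pt_eq_G F G (ne_zero_of_le hij hi) y).symm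

lemma ar_id (x : C) (i : Fin 2) (h : i ≤ i) : ar F G α (𝟙 x) i i h = 𝟙 _ := by
  by_cases hi : i = 0 <;> simp [ar, hi]

lemma ar_comp {x y z : C} (f : x ⟶ y) (g : y ⟶ z) (i j l : Fin 2) (hij : i ≤ j) (hjl : j ≤ l) :
    ar F G α f i j hij ≫ ar F G α g j l hjl = ar F G α (f ≫ g) i l (hij.trans hjl) := by
  by_cases hi : i = 0 <;> by_cases hj : j = 0 <;> by_cases hl : l = 0
  · simp [ar, hi, hj, hl]
  · simp [ar, hi, hj, hl]
  · exact absurd (Fin.le_zero_iff.mp (hl ▸ hjl)) hj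
  · simp [ar, hi, hj, hl]
  · exact absurd (Fin.le_zero_iff.mp (hj ▸ hij)) hi
  · exact absurd (Fin.le_zero_iff.mp (hj ▸ hij)) hi
  · exact absurd (Fin.le_zero_iff.mp (hl ▸ hjl)) hj
  · simp [ar, hi, hj, hl]

/-- The homotopy on simplices. -/
def hFun {m : ℕ} (x : ComposableArrows C m) (φ : Fin (m + 1) →o Fin 2) :
    ComposableArrows D m where
  obj j := pt F G (φ j) (x.obj j)
  map {i j} f := ar F G α (x.map f) (φ i) (φ j) (φ.monotone (leOfHom f))
  map_id j := by
    rw [CategoryTheory.Functor.map_id, ar_id]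
  map_comp {i j l} f g := by
    rw [CategoryTheory.Functor.map_comp]
    exact (ar_comp F G α (x.map f) (x.map g) (φ i) (φ j) (φ l) _ _).symm

/-- The simplicial homotopy `nerve C × Δ[1] ⟶ nerve D` associated to `α`. -/
def nerveH : SSet.ptProd (nerve C) Δ[1] ⟶ nerve D where
  app m := TypeCat.ofHom (fun p => hFun F G α p.1 p.2.down.toOrderHom)
  naturality m₁ m₂ u := by rfl

lemma nerveH_end0 :
    SSet.ptEnd (nerve C) 0 ≫ nerveH F G α =
      nerveFunctor.map (X := Cat.of C) (Y := Cat.of D) F.toCatHom := by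
  apply NatTrans.ext; funext m; refine ConcreteCategory.hom_ext _ _ fun x => ?_
  have hφ : ∀ j, (SimplexCategory.Hom.toOrderHom
      ((SSet.stdSimplex.const.{0} 1 (0 : Fin 2) m).down)) j = 0 := fun j => rfl
  refine CategoryTheory.Functor.ext (fun j => pt_eq_F F G (hφ j) (x.obj j)) fun i j f => ?_
  have key : ∀ (hm : (SimplexCategory.Hom.toOrderHom
        ((SSet.stdSimplex.const.{0} 1 (0 : Fin 2) m).down)) i ≤
        (SimplexCategory.Hom.toOrderHom ((SSet.stdSimplex.const.{0} 1 (0 : Fin 2) m).down)) j),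
      ar F G α (x.map f) _ _ hm =
        eqToHom (pt_eq_F F G (hφ i) (x.obj i)) ≫ F.map (x.map f) ≫
          eqToHom (pt_eq_F F G (hφ j) (x.obj j)).symm := by
    intro hm
    rw [ar, dif_pos (hφ i), dif_pos (hφ j)]
  exact key ((SimplexCategory.Hom.toOrderHom ((SSet.stdSimplex.const.{0} 1 (0 : Fin 2) m).down)).monotone (leOfHom f))

lemma nerveH_end1 :
    SSet.ptEnd (nerve C) 1 ≫ nerveH F G α =
      nerveFunctor.map (X := Cat.of C) (Y := Cat.of D) G.toCatHom := by
  apply NatTrans.ext; funext m; refine ConcreteCategory.hom_ext _ _ fun x => ?_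
  have hφ : ∀ j, (SimplexCategory.Hom.toOrderHom
      ((SSet.stdSimplex.const.{0} 1 (1 : Fin 2) m).down)) j ≠ 0 :=
    fun j => (by decide : (1 : Fin 2) ≠ 0)
  refine CategoryTheory.Functor.ext (fun j => pt_eq_G F G (hφ j) (x.obj j)) fun i j f => ?_
  have key : ∀ (hm : (SimplexCategory.Hom.toOrderHom
        ((SSet.stdSimplex.const.{0} 1 (1 : Fin 2) m).down)) i ≤
        (SimplexCategory.Hom.toOrderHom ((SSet.stdSimplex.const.{0} 1 (1 : Fin 2) m).down)) j),
      ar F G α (x.map f) _ _ hm =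
        eqToHom (pt_eq_G F G (hφ i) (x.obj i)) ≫ G.map (x.map f) ≫
          eqToHom (pt_eq_G F G (hφ j) (x.obj j)).symm := by
    intro hm
    rw [ar, dif_neg (hφ i)]
  exact key ((SimplexCategory.Hom.toOrderHom ((SSet.stdSimplex.const.{0} 1 (1 : Fin 2) m).down)).monotone (leOfHom f))

lemma shomotopy_nerve (α : F ⟶ G) :
    SSet.SHomotopy (nerveFunctor.map (X := Cat.of C) (Y := Cat.of D) F.toCatHom)
      (nerveFunctor.map (X := Cat.of C) (Y := Cat.of D) G.toCatHom) :=
  SSet.shomotopy_of_pt (nerveH F G α) (nerveH_end0 F G α) (nerveH_end1 F G α)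

end NerveHtpy

/-- For a simplicial category `A` and `k ≥ 0`, the assignment sending a chain
`(p₀,A₀) → ⋯ → (p_k,A_k)` of `(YA)_k` to the constant chain
`(p_k,A₀) → ⋯ → (p_k,A_k)` (with maps `(id, t_k ⋯ t_{i+1} a_i)`), together with
the comparison maps `(t_k ⋯ t_{i+1} ⋯ t_1, id)`, defines a functor
`r : (YA)_k → (ȲA)_k` and a natural transformation `𝟭 ⟶ r ⋙ incl` exhibiting
`(ȲA)_k` as a (strong) deformation retract of `(YA)_k`; in particular the
inclusion induces a homotopy equivalence of nerves. -/
theorem ybar_deformation_retract (A : SCat) (k : ℕ) :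
    ∃ (r : YObj A k ⥤ YbarObj A k) (η : 𝟭 (YObj A k) ⟶ r ⋙ yInclusion A k),
      yInclusion A k ⋙ r = 𝟭 (YbarObj A k) ∧
      (∀ (C : YObj A k) (j : Fin (k + 1)),
        ((r.obj C).obj).obj j = ⟨(C.obj (Fin.last k)).p, (C.obj j).pt⟩) ∧
      (∀ (C : YObj A k) (j : Fin (k + 1)),
        HEq ((η.app C).1.app j)
          (BHom.mk (X := C.obj j) (Y := ⟨(C.obj (Fin.last k)).p, (C.obj j).pt⟩)
            ((C.map (homOfLE (Fin.le_last j)) :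
              BHom (C.obj j) (C.obj (Fin.last k))).t)
            (A.ident (C.obj j).pt (C.obj (Fin.last k)).p))) ∧
      (∀ D : YbarObj A k,
        HEq (η.app ((yInclusion A k).obj D)) (𝟙 ((yInclusion A k).obj D))) ∧
      (∃ g : nerve (YObj A k) ⟶ nerve (YbarObj A k),
        SSet.SHomotopic
          (nerveFunctor.map (X := Cat.of (YbarObj A k)) (Y := Cat.of (YObj A k))
            (yInclusion A k).toCatHom ≫ g) (𝟙 _) ∧
        SSet.SHomotopic
          (g ≫ nerveFunctor.map (X := Cat.of (YbarObj A k)) (Y := Cat.of (YObj A k))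
            (yInclusion A k).toCatHom) (𝟙 _)) := by
  refine ⟨yr, yeta, incl_comp_yr, fun C j => rfl, fun C j => HEq.rfl,
    fun D => etaApp_const D, ?_⟩
  refine ⟨nerveFunctor.map (X := Cat.of (YObj A k)) (Y := Cat.of (YbarObj A k)) yr.toCatHom, ?_, ?_⟩
  · have e : nerveFunctor.map (X := Cat.of (YbarObj A k)) (Y := Cat.of (YObj A k))
          (yInclusion A k).toCatHom ≫
        nerveFunctor.map (X := Cat.of (YObj A k)) (Y := Cat.of (YbarObj A k)) yr.toCatHom = 𝟙 _ := by
      rw [← Functor.map_comp, show (yInclusion A k).toCatHom ≫ yr.toCatHom =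
        (yInclusion A k ⋙ yr).toCatHom from rfl, incl_comp_yr]
      exact nerveFunctor.map_id (Cat.of (YbarObj A k))
    erw [e]
    exact Relation.EqvGen.refl _
  · have h2 : SSet.SHomotopy
        (nerveFunctor.map (X := Cat.of (YObj A k)) (Y := Cat.of (YObj A k)) (𝟭 (YObj A k)).toCatHom)
        (nerveFunctor.map (X := Cat.of (YObj A k)) (Y := Cat.of (YObj A k))
          (yr ⋙ yInclusion A k).toCatHom) :=
      NerveHtpy.shomotopy_nerve _ _ yeta
    have e3 : nerveFunctor.map (X := Cat.of (YObj A k)) (Y := Cat.of (YbarObj A k)) yr.toCatHom ≫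
        nerveFunctor.map (X := Cat.of (YbarObj A k)) (Y := Cat.of (YObj A k)) (yInclusion A k).toCatHom =
        nerveFunctor.map (X := Cat.of (YObj A k)) (Y := Cat.of (YObj A k))
          (yr ⋙ yInclusion A k).toCatHom := by
      rw [← Functor.map_comp]; rfl
    have e4 : nerveFunctor.map (X := Cat.of (YObj A k)) (Y := Cat.of (YObj A k))
        (𝟭 (YObj A k)).toCatHom = 𝟙 _ := nerveFunctor.map_id (Cat.of (YObj A k))
    erw [e3]
    exact Relation.EqvGen.symm _ _ (Relation.EqvGen.rel _ _ (e4 ▸ h2))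
end
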